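/- Let π : H → L be the nearest point projection onto the F-line L and suppose cosh d(y,z) = cosh d(y,πz)·cosh d(πz,z) holds for all y ∈ L, z ∈ H. Let c be a unit speed geodesic in L. Then for each t ∈ ℝ and every s > 0, the bisector of c(t−s) and c(t+s) equals π⁻¹(N̄_t), where N̄_t is the set of points of L equidistant from c(t−s) and c(t+s); in particular this bisector does not depend on s > 0. -/

import Mathlib

/-- The Minkowski bilinear form on `ℝ^{n+1}`, used for the hyperboloid model of real
hyperbolic `n`-space. -/
def minkB (n : ℕ) (x y : Fin (n + 1) → ℝ) : ℝ :=
  (∑ i : Fin n, x i.castSucc * y i.castSucc) - x (Fin.last n) * y (Fin.last n)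

lemma minkB_symm (n : ℕ) (x y : Fin (n + 1) → ℝ) : minkB n x y = minkB n y x := by
  simp [minkB, mul_comm]

lemma minkB_add_left (n : ℕ) (x y z : Fin (n + 1) → ℝ) :
    minkB n (x + y) z = minkB n x z + minkB n y z := by
  simp [minkB, add_mul, Finset.sum_add_distrib]; ring

lemma minkB_sub_left (n : ℕ) (x y z : Fin (n + 1) → ℝ) :
    minkB n (x - y) z = minkB n x z - minkB n y z := by
  simp [minkB, sub_mul, Finset.sum_sub_distrib]; ring

lemma minkB_smul_left (n : ℕ) (a : ℝ) (x y : Fin (n + 1) → ℝ) :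
    minkB n (a • x) y = a * minkB n x y := by
  simp [minkB, Finset.mul_sum, mul_assoc, mul_sub]

lemma minkB_add_right (n : ℕ) (x y z : Fin (n + 1) → ℝ) :
    minkB n x (y + z) = minkB n x y + minkB n x z := by
  rw [minkB_symm, minkB_add_left, minkB_symm n y x, minkB_symm n z x]

lemma minkB_sub_right (n : ℕ) (x y z : Fin (n + 1) → ℝ) :
    minkB n x (y - z) = minkB n x y - minkB n x z := by
  rw [minkB_symm, minkB_sub_left, minkB_symm n y x, minkB_symm n z x]

lemma minkB_smul_right (n : ℕ) (a : ℝ) (x y : Fin (n + 1) → ℝ) :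
    minkB n x (a • y) = a * minkB n x y := by
  rw [minkB_symm, minkB_smul_left, minkB_symm]

/-- A vector orthogonal to a timelike unit vector and null must vanish. -/
lemma minkB_null_orth_eq_zero (n : ℕ) (p w : Fin (n + 1) → ℝ)
    (hp : minkB n p p = -1) (ho : minkB n w p = 0) (hw : minkB n w w = 0) :
    w = 0 := by
  have hP : (∑ i : Fin n, p i.castSucc ^ 2) = p (Fin.last n) ^ 2 - 1 := by
    have := hp; simp only [minkB, ← sq] at this; linarith
  have hW : (∑ i : Fin n, w i.castSucc ^ 2) = w (Fin.last n) ^ 2 := by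
    have := hw; simp only [minkB, ← sq] at this; linarith
  have hO : (∑ i : Fin n, w i.castSucc * p i.castSucc) =
      w (Fin.last n) * p (Fin.last n) := by
    have := ho; simp only [minkB] at this; linarith
  have hcs := Finset.sum_mul_sq_le_sq_mul_sq Finset.univ
    (fun i : Fin n => w i.castSucc) (fun i : Fin n => p i.castSucc)
  rw [hO, hW, hP, mul_pow] at hcs
  have hwn : w (Fin.last n) = 0 := by
    by_contra h
    have h2 : 0 < w (Fin.last n) ^ 2 := by positivity
    nlinarith
  have hsum : (∑ i : Fin n, w i.castSucc ^ 2) = 0 := by rw [hW, hwn]; ring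
  have hz : ∀ i : Fin n, w i.castSucc = 0 := by
    intro i
    have := Finset.sum_eq_zero_iff_of_nonneg
      (fun j _ => sq_nonneg (w (Fin.castSucc j))) |>.mp hsum i (Finset.mem_univ i)
    exact pow_eq_zero_iff (n := 2) (by norm_num) |>.mp this
  funext j
  refine Fin.lastCases ?_ ?_ j
  · exact hwn
  · intro i; exact hz i

lemma cosh_inj_of_nonneg {a b : ℝ} (ha : 0 ≤ a) (hb : 0 ≤ b)
    (h : Real.cosh a = Real.cosh b) : a = b := by
  have h1 : |a| ≤ |b| := Real.cosh_le_cosh.mp h.le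
  have h2 : |b| ≤ |a| := Real.cosh_le_cosh.mp h.ge
  rw [abs_of_nonneg ha, abs_of_nonneg hb] at h1 h2
  linarith

/-- Let `π : H → L` be the nearest point projection onto the `F`-line `L`
(a subset isometric to a real hyperbolic space, encoded by the hyperboloid chart `f`),
satisfying `cosh d(y,z) = cosh d(y,πz) · cosh d(πz,z)` for all `y ∈ L`, `z ∈ H`.
Let `c` be a unit speed geodesic in `L`. Then for each `t ∈ ℝ` and every `s > 0`, the
bisector of `c(t−s)` and `c(t+s)` equals `π⁻¹(N̄_t)`, where `N̄_t` is the set of points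
of `L` equidistant from `c(t−s)` and `c(t+s)`; in particular this bisector does not
depend on `s > 0`. -/
theorem bisector_of_geodesic_points {H : Type*} [MetricSpace H]
    (L : Set H) (π : H → H)
    (hπL : ∀ w : H, π w ∈ L)
    (hcosh : ∀ y ∈ L, ∀ z : H,
      Real.cosh (dist y z) = Real.cosh (dist y (π z)) * Real.cosh (dist (π z) z))
    (c : ℝ → H) (hcL : ∀ t, c t ∈ L)
    (hgeo : ∀ a b : ℝ, dist (c a) (c b) = |a - b|)
    -- `L` is isometric to a real hyperbolic space (hyperboloid model chart `f`):
    (n : ℕ) (f : H → (Fin (n + 1) → ℝ))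
    (hf1 : ∀ x ∈ L, minkB n (f x) (f x) = -1 ∧ 0 < f x (Fin.last n))
    (hf2 : ∀ x ∈ L, ∀ y ∈ L, Real.cosh (dist x y) = -(minkB n (f x) (f y)))
    (hf3 : ∀ v : Fin (n + 1) → ℝ, minkB n v v = -1 → 0 < v (Fin.last n) →
      ∃ x ∈ L, f x = v) :
    (∀ t s : ℝ, 0 < s →
      {x : H | dist x (c (t - s)) = dist x (c (t + s))}
        = π ⁻¹' {x : H | x ∈ L ∧ dist x (c (t - s)) = dist x (c (t + s))})
    ∧ ∀ t s s' : ℝ, 0 < s → 0 < s' →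
      {x : H | dist x (c (t - s)) = dist x (c (t + s))}
        = {x : H | dist x (c (t - s')) = dist x (c (t + s'))} := by
  -- products of `minkB` of points of the geodesic
  have Bc : ∀ a b : ℝ, minkB n (f (c a)) (f (c b)) = -Real.cosh (a - b) := by
    intro a b
    have h := hf2 (c a) (hcL a) (c b) (hcL b)
    rw [hgeo, Real.cosh_abs] at h
    linarith
  -- equidistance descends through the projection
  have lift : ∀ (x : H) (u v : ℝ),
      dist x (c u) = dist x (c v) ↔ dist (π x) (c u) = dist (π x) (c v) := by
    intro x u v
    have hu := hcosh (c u) (hcL u) x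
    have hv := hcosh (c v) (hcL v) x
    have hpos : 0 < Real.cosh (dist (π x) x) := Real.cosh_pos _
    constructor
    · intro h
      have h2 : Real.cosh (dist (c u) (π x)) = Real.cosh (dist (c v) (π x)) := by
        rw [dist_comm x (c u), dist_comm x (c v)] at h
        rw [h] at hu
        have := hu.symm.trans hv
        exact mul_right_cancel₀ (ne_of_gt hpos) this
      have := cosh_inj_of_nonneg dist_nonneg dist_nonneg h2
      rw [dist_comm (c u), dist_comm (c v)] at this
      exact this
    · intro h
      rw [dist_comm (π x) (c u), dist_comm (π x) (c v)] at h
      rw [h] at hu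
      have h2 := hu.trans hv.symm
      have := cosh_inj_of_nonneg dist_nonneg dist_nonneg h2
      rw [dist_comm (c u) x, dist_comm (c v) x] at this
      exact this
  -- key: for y ∈ L, equidistance from c(t±s) is independent of s > 0
  have key : ∀ t : ℝ, ∃ q : Fin (n + 1) → ℝ,
      ∀ y ∈ L, ∀ s : ℝ, 0 < s →
        (dist y (c (t - s)) = dist y (c (t + s)) ↔ minkB n (f y) q = 0) := by
    intro t
    set p := f (c t) with hp
    have hsinh1 : Real.sinh 1 ≠ 0 := ne_of_gt (by
      rw [Real.sinh_pos_iff]; norm_num)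
    set q : Fin (n + 1) → ℝ :=
      (Real.sinh 1)⁻¹ • (f (c (t + 1)) - Real.cosh 1 • p) with hq
    have Bpp : minkB n p p = -1 := by
      have := Bc t t; simpa using this
    have Bf1p : minkB n (f (c (t + 1))) p = -Real.cosh 1 := by
      have := Bc (t + 1) t; simpa using this
    have Bqp : minkB n q p = 0 := by
      rw [hq, minkB_smul_left, minkB_sub_left, minkB_smul_left, Bpp, Bf1p]
      ring
    have Bfq : ∀ u : ℝ, minkB n (f (c u)) q = Real.sinh (u - t) := by
      intro u
      rw [hq, minkB_smul_right, minkB_sub_right, minkB_smul_right]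
      have h1 : minkB n (f (c u)) (f (c (t + 1))) = -Real.cosh (u - t - 1) := by
        have := Bc u (t + 1); rw [this]; ring_nf
      have h2 : minkB n (f (c u)) p = -Real.cosh (u - t) := Bc u t
      rw [h1, h2, Real.cosh_sub]
      field_simp
      ring
    have Bqq : minkB n q q = 1 := by
      have hf1q : minkB n (f (c (t + 1))) q = Real.sinh 1 := by
        have := Bfq (t + 1); simpa using this
      have hpq : minkB n p q = 0 := by rw [minkB_symm]; exact Bqp
      nth_rewrite 1 [hq]
      rw [minkB_smul_left, minkB_sub_left, minkB_smul_left, hf1q, hpq]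
      field_simp
      ring
    -- the geodesic representation
    have rep : ∀ u : ℝ, f (c u) = Real.cosh (u - t) • p + Real.sinh (u - t) • q := by
      intro u
      set w : Fin (n + 1) → ℝ :=
        f (c u) - (Real.cosh (u - t) • p + Real.sinh (u - t) • q) with hw
      have Bfp : minkB n (f (c u)) p = -Real.cosh (u - t) := Bc u t
      have hwp : minkB n w p = 0 := by
        rw [hw, minkB_sub_left, minkB_add_left, minkB_smul_left, minkB_smul_left,
          Bfp, Bpp, Bqp]
        ring
      have hwq : minkB n w q = 0 := by
        rw [hw, minkB_sub_left, minkB_add_left, minkB_smul_left, minkB_smul_left,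
          Bfq, Bqq, minkB_symm n p q, Bqp]
        ring
      have hww : minkB n w w = 0 := by
        have h1 : minkB n w (f (c u)) = 0 := by
          rw [hw, minkB_sub_left, minkB_add_left, minkB_smul_left, minkB_smul_left,
            Bc u u, minkB_symm n p (f (c u)), Bfp, minkB_symm n q (f (c u)), Bfq]
          simp only [sub_self, Real.cosh_zero]
          have := Real.cosh_sq (u - t)
          nlinarith
        nth_rewrite 2 [hw]
        rw [minkB_sub_right, minkB_add_right, minkB_smul_right, minkB_smul_right,
          h1, hwp, hwq]
        ring
      have hw0 : w = 0 := minkB_null_orth_eq_zero n p w Bpp hwp hww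
      have : f (c u) - (Real.cosh (u - t) • p + Real.sinh (u - t) • q) = 0 := hw0
      linear_combination (norm := abel_nf) this
    refine ⟨q, ?_⟩
    intro y hy s hs
    have hcoshm : Real.cosh (dist y (c (t - s)))
        = Real.cosh s * (-(minkB n (f y) p)) + Real.sinh s * minkB n (f y) q := by
      rw [hf2 y hy (c (t - s)) (hcL _), rep (t - s), minkB_add_right,
        minkB_smul_right, minkB_smul_right]
      have h1 : t - s - t = -s := by ring
      rw [h1, Real.cosh_neg, Real.sinh_neg]
      ring
    have hcoshp : Real.cosh (dist y (c (t + s)))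
        = Real.cosh s * (-(minkB n (f y) p)) - Real.sinh s * minkB n (f y) q := by
      rw [hf2 y hy (c (t + s)) (hcL _), rep (t + s), minkB_add_right,
        minkB_smul_right, minkB_smul_right]
      have h1 : t + s - t = s := by ring
      rw [h1]
      ring
    have hss : Real.sinh s ≠ 0 := ne_of_gt (Real.sinh_pos_iff.mpr hs)
    constructor
    · intro h
      have := congrArg Real.cosh h
      rw [hcoshm, hcoshp] at this
      have h2 : 2 * (Real.sinh s * minkB n (f y) q) = 0 := by linarith
      have := mul_eq_zero.mp (by linarith : Real.sinh s * minkB n (f y) q = 0)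
      tauto
    · intro h
      have : Real.cosh (dist y (c (t - s))) = Real.cosh (dist y (c (t + s))) := by
        rw [hcoshm, hcoshp, h]; ring
      exact cosh_inj_of_nonneg dist_nonneg dist_nonneg this
  constructor
  · intro t s hs
    obtain ⟨q, hkey⟩ := key t
    ext x
    simp only [Set.mem_setOf_eq, Set.mem_preimage]
    constructor
    · intro h
      refine ⟨hπL x, ?_⟩
      exact (lift x (t - s) (t + s)).mp h
    · intro ⟨_, h⟩
      exact (lift x (t - s) (t + s)).mpr h
  · intro t s s' hs hs'
    obtain ⟨q, hkey⟩ := key t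
    ext x
    simp only [Set.mem_setOf_eq]
    rw [lift x (t - s) (t + s), lift x (t - s') (t + s'),
      hkey (π x) (hπL x) s hs, hkey (π x) (hπL x) s' hs']
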